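/- For every integer k ≥ 3, the function ψ_k : (d_k,∞) → (0,∞) defined by ψ_k(d) = P[Po(λ_k(d)) ≥ k] is strictly increasing and continuous. -/

import Mathlib

open Real Set Filter Topology

/-- Upper tail of the Poisson distribution with mean `lam`:
`P[Po(lam) ≥ m] = ∑_{j ≥ m} e^{-lam} lam^j / j!`. -/
noncomputable def poTail (lam : ℝ) (m : ℕ) : ℝ :=
  ∑' j : ℕ, if m ≤ j then Real.exp (-lam) * lam ^ j / (j.factorial : ℝ) else 0

/-- `f_k(λ) = λ / P[Po(λ) ≥ k-1]`. -/
noncomputable def fPW (k : ℕ) (lam : ℝ) : ℝ := lam / poTail lam (k - 1)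

/-- `d_k = inf { f_k(λ) : λ > 0 }`. -/
noncomputable def dPW (k : ℕ) : ℝ := sInf (fPW k '' Set.Ioi (0 : ℝ))

noncomputable def phiF (m : ℕ) (x : ℝ) : ℝ := ∑' i : ℕ, x ^ i / ((i + m).factorial : ℝ)

lemma summable_po (lam : ℝ) :
    Summable (fun j : ℕ => Real.exp (-lam) * lam ^ j / (j.factorial : ℝ)) := by
  simpa [mul_div_assoc] using (Real.summable_pow_div_factorial lam).mul_left (Real.exp (-lam))

lemma summable_ite_of {g : ℕ → ℝ} (hg : Summable g) (p : ℕ → Prop) [DecidablePred p] :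
    Summable (fun j : ℕ => if p j then g j else 0) := by
  refine (hg.indicator {j | p j}).congr fun j => ?_
  simp [Set.indicator_apply, Set.mem_setOf_eq]

lemma summable_po_ite (lam : ℝ) (m : ℕ) :
    Summable (fun j : ℕ =>
      if m ≤ j then Real.exp (-lam) * lam ^ j / (j.factorial : ℝ) else 0) :=
  summable_ite_of (summable_po lam) _

lemma tsum_po (lam : ℝ) :
    ∑' j : ℕ, Real.exp (-lam) * lam ^ j / (j.factorial : ℝ) = 1 := by
  have h : ∑' j : ℕ, lam ^ j / (j.factorial : ℝ) = Real.exp lam := by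
    rw [Real.exp_eq_exp_ℝ, NormedSpace.exp_eq_tsum_div]
  calc ∑' j : ℕ, Real.exp (-lam) * lam ^ j / (j.factorial : ℝ)
      = Real.exp (-lam) * ∑' j : ℕ, lam ^ j / (j.factorial : ℝ) := by
        rw [← tsum_mul_left]; simp [mul_div_assoc]
    _ = 1 := by rw [h, ← Real.exp_add]; simp

lemma poTail_eq (lam : ℝ) (m : ℕ) :
    poTail lam m = 1 - Real.exp (-lam) * ∑ j ∈ Finset.range m, lam ^ j / (j.factorial : ℝ) := by
  set g : ℕ → ℝ := fun j => Real.exp (-lam) * lam ^ j / (j.factorial : ℝ) with hgdef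
  have h2 : Summable (fun j : ℕ => if j < m then g j else 0) :=
    summable_ite_of (summable_po lam) _
  have hsum : ∑' j : ℕ, (if j < m then g j else 0) = ∑ j ∈ Finset.range m, g j := by
    have h0 : ∑' j : ℕ, (if j < m then g j else 0)
        = ∑ j ∈ Finset.range m, (if j < m then g j else 0) := by
      refine tsum_eq_sum ?_
      intro b hb
      simp only [Finset.mem_range] at hb
      simp [hb]
    rw [h0]
    exact Finset.sum_congr rfl fun j hj => by simp [Finset.mem_range.1 hj]
  have hadd : ∀ j : ℕ, (if m ≤ j then g j else 0) + (if j < m then g j else 0) = g j := by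
    intro j
    rcases le_or_gt m j with h | h
    · simp [h, not_lt.2 h]
    · simp [h, not_le.2 h]
  have heq : ∑' j : ℕ, ((if m ≤ j then g j else 0) + (if j < m then g j else 0))
      = ∑' j : ℕ, g j := tsum_congr hadd
  rw [Summable.tsum_add (summable_po_ite lam m) h2] at heq
  have h1 : ∑' j : ℕ, g j = 1 := tsum_po lam
  have hfin : poTail lam m = 1 - ∑ j ∈ Finset.range m, g j := by
    unfold poTail
    linarith [heq, h1, hsum]
  rw [hfin, hgdef, Finset.mul_sum]
  simp [mul_div_assoc]

lemma hasDerivAt_pS (m : ℕ) (x : ℝ) :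
    HasDerivAt (fun y : ℝ => ∑ j ∈ Finset.range (m + 1), y ^ j / (j.factorial : ℝ))
      (∑ j ∈ Finset.range m, x ^ j / (j.factorial : ℝ)) x := by
  have h : ∀ j ∈ Finset.range (m + 1),
      HasDerivAt (fun y : ℝ => y ^ j / (j.factorial : ℝ))
        ((j : ℝ) * x ^ (j - 1) / (j.factorial : ℝ)) x := fun j _ =>
    (hasDerivAt_pow j x).div_const _
  have hsum := HasDerivAt.fun_sum h
  refine hsum.congr_deriv (Eq.symm ?_)
  rw [Finset.sum_range_succ']
  simp only [Nat.cast_zero, zero_mul, Nat.factorial_zero, Nat.cast_one, zero_div, add_zero]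
  refine Finset.sum_congr rfl fun i _ => ?_
  have : ((i + 1).factorial : ℝ) = (i + 1) * (i.factorial : ℝ) := by
    rw [Nat.factorial_succ]; push_cast; ring
  rw [this]
  simp only [Nat.add_sub_cancel, Nat.cast_add, Nat.cast_one]
  have h1 : (i.factorial : ℝ) ≠ 0 := Nat.cast_ne_zero.2 i.factorial_ne_zero
  have h2 : ((i : ℝ) + 1) ≠ 0 := by positivity
  field_simp

lemma hasDerivAt_poTail (m : ℕ) (x : ℝ) :
    HasDerivAt (fun y => poTail y (m + 1)) (Real.exp (-x) * x ^ m / (m.factorial : ℝ)) x := by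
  have heq : (fun y => poTail y (m + 1)) =
      fun y => 1 - Real.exp (-y) * ∑ j ∈ Finset.range (m + 1), y ^ j / (j.factorial : ℝ) :=
    funext fun y => poTail_eq y (m + 1)
  rw [heq]
  have hE : HasDerivAt (fun y : ℝ => Real.exp (-y)) (-Real.exp (-x)) x := by
    convert (hasDerivAt_neg x).exp using 1; ring
  have hS := hasDerivAt_pS m x
  have hmul := hE.mul hS
  have := (hasDerivAt_const x (1 : ℝ)).sub hmul
  refine this.congr_deriv (Eq.symm ?_)
  rw [Finset.sum_range_succ]
  ring

lemma poTail_pos {lam : ℝ} (hl : 0 < lam) (m : ℕ) : 0 < poTail lam m := by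
  have hterm : (0:ℝ) < Real.exp (-lam) * lam ^ m / (m.factorial : ℝ) := by positivity
  have hle : Real.exp (-lam) * lam ^ m / (m.factorial : ℝ) ≤ poTail lam m := by
    have := Summable.le_tsum (summable_po_ite lam m) m ?_
    · simpa [poTail] using this
    · intro j _
      rcases le_or_gt m j with h | h
      · simp only [h, if_true]; positivity
      · simp [not_le.2 h]
  linarith

lemma poTail_le_one {lam : ℝ} (hl : 0 ≤ lam) (m : ℕ) : poTail lam m ≤ 1 := by
  rw [poTail_eq]
  have : (0:ℝ) ≤ Real.exp (-lam) * ∑ j ∈ Finset.range m, lam ^ j / (j.factorial : ℝ) := by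
    apply mul_nonneg (Real.exp_pos _).le
    apply Finset.sum_nonneg
    intro j _; positivity
  linarith

lemma continuous_poTail (m : ℕ) : Continuous fun x => poTail x m := by
  have heq : (fun x => poTail x m) =
      fun x => 1 - Real.exp (-x) * ∑ j ∈ Finset.range m, x ^ j / (j.factorial : ℝ) :=
    funext fun y => poTail_eq y m
  rw [heq]
  fun_prop

lemma summable_phi (m : ℕ) {x : ℝ} (hx : 0 ≤ x) :
    Summable fun i : ℕ => x ^ i / ((i + m).factorial : ℝ) := by
  refine Summable.of_nonneg_of_le (fun i => by positivity) (fun i => ?_)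
    (Real.summable_pow_div_factorial x)
  have hf : (i.factorial : ℝ) ≤ ((i + m).factorial : ℝ) := by
    exact_mod_cast Nat.factorial_le (Nat.le_add_right i m)
  have h0 : (0:ℝ) < (i.factorial : ℝ) := by positivity
  gcongr

lemma poTail_eq_tsum (m : ℕ) {lam : ℝ} :
    poTail lam m = Real.exp (-lam) * lam ^ m * phiF m lam := by
  have hsplit := Summable.sum_add_tsum_nat_add m (summable_po lam)
  rw [tsum_po lam] at hsplit
  have h1 : poTail lam m
      = ∑' i : ℕ, Real.exp (-lam) * lam ^ (i + m) / ((i + m).factorial : ℝ) := by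
    rw [poTail_eq]
    have : Real.exp (-lam) * ∑ j ∈ Finset.range m, lam ^ j / (j.factorial : ℝ)
        = ∑ j ∈ Finset.range m, Real.exp (-lam) * lam ^ j / (j.factorial : ℝ) := by
      rw [Finset.mul_sum]; simp [mul_div_assoc]
    rw [this]
    linarith
  rw [h1, phiF, ← tsum_mul_left]
  refine tsum_congr fun i => ?_
  rw [pow_add]
  ring

lemma phiF_lt {m : ℕ} {a b : ℝ} (ha : 0 ≤ a) (hab : a < b) : phiF m a < phiF m b := by
  refine Summable.tsum_lt_tsum (i := 1) (fun i => ?_) ?_ (summable_phi m ha)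
    (summable_phi m (ha.trans hab.le))
  · have : a ^ i ≤ b ^ i := pow_le_pow_left₀ ha hab.le i
    gcongr
  · have : a ^ 1 < b ^ 1 := by simpa using hab
    gcongr

lemma gsign (n : ℕ) (x : ℝ) :
    poTail x (n + 1) - x * (Real.exp (-x) * x ^ n / (n.factorial : ℝ))
      = Real.exp (-x) * x ^ (n + 1) * (phiF (n + 1) x - 1 / (n.factorial : ℝ)) := by
  rw [poTail_eq_tsum (n + 1)]
  ring

lemma continuousAt_fPW {k : ℕ} {x : ℝ} (hx : 0 < x) : ContinuousAt (fPW k) x := by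
  have : ContinuousAt (fun y => y / poTail y (k - 1)) x :=
    continuousAt_id.div (continuous_poTail _).continuousAt (poTail_pos hx _).ne'
  exact this

lemma fPW_ge {k : ℕ} {x : ℝ} (hx : 0 < x) : x ≤ fPW k x := by
  rw [fPW, le_div_iff₀ (poTail_pos hx _)]
  nlinarith [poTail_le_one hx.le (k - 1), (poTail_pos hx (k - 1))]

lemma fPW_pos {k : ℕ} {x : ℝ} (hx : 0 < x) : 0 < fPW k x :=
  div_pos hx (poTail_pos hx _)

lemma dPW_le {k : ℕ} {x : ℝ} (hx : 0 < x) : dPW k ≤ fPW k x := by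
  refine csInf_le ⟨0, fun y hy => ?_⟩ ⟨x, hx, rfl⟩
  obtain ⟨z, hz, rfl⟩ := hy
  exact (fPW_pos hz).le

lemma hasDerivAt_fPW {k n : ℕ} (hkn : k - 1 = n + 1) {x : ℝ} (hx : 0 < x) :
    HasDerivAt (fPW k)
      ((poTail x (k - 1) - x * (Real.exp (-x) * x ^ n / (n.factorial : ℝ))) /
        (poTail x (k - 1)) ^ 2) x := by
  have hP : HasDerivAt (fun y => poTail y (k - 1))
      (Real.exp (-x) * x ^ n / (n.factorial : ℝ)) x := by
    rw [hkn]; exact hasDerivAt_poTail n x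
  have := (hasDerivAt_id x).div hP (poTail_pos hx _).ne'
  exact this.congr_deriv (by simp)

lemma f_strictMono_after {k n : ℕ} (hkn : k - 1 = n + 1) {c : ℝ} (hc : 0 < c)
    (hphi : 1 / (n.factorial : ℝ) ≤ phiF (n + 1) c) :
    StrictMonoOn (fPW k) (Ici c) := by
  refine strictMonoOn_of_deriv_pos (convex_Ici c) (fun y hy => ?_) (fun y hy => ?_)
  · exact (continuousAt_fPW (hc.trans_le hy)).continuousWithinAt
  · rw [interior_Ici] at hy
    have hyc : c < y := hy
    have hy0 : 0 < y := hc.trans hyc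
    rw [(hasDerivAt_fPW hkn hy0).deriv]
    have hnum : 0 < poTail y (k - 1) - y * (Real.exp (-y) * y ^ n / (n.factorial : ℝ)) := by
      rw [hkn, gsign n y]
      have h1 : 1 / (n.factorial : ℝ) < phiF (n + 1) y :=
        lt_of_le_of_lt hphi (phiF_lt hc.le hyc)
      have : 0 < phiF (n + 1) y - 1 / (n.factorial : ℝ) := by linarith
      positivity
    exact div_pos hnum (pow_pos (poTail_pos hy0 _) 2)

lemma exists_root_above {k : ℕ} {a d' : ℝ} (ha : 0 < a) (hd : fPW k a < d') :
    ∃ b, a < b ∧ 0 < b ∧ fPW k b = d' := by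
  set M := max a d' + 1 with hM
  have haM : a ≤ M := le_trans (le_max_left _ _) (by linarith [hM ▸ le_refl M])
  have hM0 : 0 < M := lt_of_lt_of_le ha haM
  have hdM : d' < fPW k M := by
    have h1 : d' < M := by
      have := le_max_right a d'
      simp only [hM]; linarith
    exact lt_of_lt_of_le h1 (fPW_ge hM0)
  have hcont : ContinuousOn (fPW k) (Icc a M) := fun y hy =>
    (continuousAt_fPW (lt_of_lt_of_le ha hy.1)).continuousWithinAt
  have := intermediate_value_Icc haM hcont
  have hmem : d' ∈ Icc (fPW k a) (fPW k M) := ⟨hd.le, hdM.le⟩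
  obtain ⟨b, hb, hfb⟩ := this hmem
  refine ⟨b, ?_, lt_of_lt_of_le ha hb.1, hfb⟩
  rcases eq_or_lt_of_le hb.1 with h | h
  · exfalso; rw [← h] at hfb; linarith
  · exact h

lemma poTail_strictMonoOn (m : ℕ) : StrictMonoOn (fun x => poTail x (m + 1)) (Ioi 0) := by
  refine strictMonoOn_of_deriv_pos (convex_Ioi 0) (continuous_poTail _).continuousOn ?_
  intro x hx
  rw [interior_Ioi] at hx
  rw [(hasDerivAt_poTail m x).deriv]
  have hx0 : (0:ℝ) < x := hx
  positivity

theorem stmt_2 (k : ℕ) (hk : 3 ≤ k) (lamk : ℝ → ℝ)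
    (hlam : ∀ d : ℝ, dPW k < d → 0 < lamk d ∧ fPW k (lamk d) = d ∧
      ∀ lam : ℝ, 0 < lam → fPW k lam = d → lam ≤ lamk d) :
    StrictMonoOn (fun d => poTail (lamk d) k) (Set.Ioi (dPW k)) ∧
    ContinuousOn (fun d => poTail (lamk d) k) (Set.Ioi (dPW k)) := by
  obtain ⟨n, hkn⟩ : ∃ n, k - 1 = n + 1 := ⟨k - 2, by omega⟩
  have hkk : k - 1 + 1 = k := by omega
  have hpos : ∀ d ∈ Ioi (dPW k), 0 < lamk d := fun d hd => (hlam d hd).1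
  have hfd : ∀ d ∈ Ioi (dPW k), fPW k (lamk d) = d := fun d hd => (hlam d hd).2.1
  have hmax : ∀ d ∈ Ioi (dPW k), ∀ lam : ℝ, 0 < lam → fPW k lam = d → lam ≤ lamk d :=
    fun d hd => (hlam d hd).2.2
  -- strict monotonicity of lamk
  have hmono : StrictMonoOn lamk (Ioi (dPW k)) := by
    intro d hd d' hd' hdd'
    have ha : 0 < lamk d := hpos d hd
    have hfa : fPW k (lamk d) < d' := by rw [hfd d hd]; exact hdd'
    obtain ⟨b, hab, hb0, hfb⟩ := exists_root_above ha hfa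
    exact lt_of_lt_of_le hab (hmax d' hd' b hb0 hfb)
  -- continuity of lamk at each point of Ioi (dPW k)
  have hcont : ∀ d0 ∈ Ioi (dPW k), ContinuousAt lamk d0 := by
    intro d0 hd0
    have hd0' : dPW k < d0 := hd0
    rw [continuousAt_iff_continuous_left'_right']
    constructor
    · -- left continuity
      have hne : (Ioo (dPW k) d0).Nonempty := nonempty_Ioo.2 hd0'
      have hsub : Ioo (dPW k) d0 ⊆ Ioi (dPW k) := fun x hx => hx.1
      have hmonoOn : MonotoneOn lamk (Ioo (dPW k) d0) :=
        (hmono.monotoneOn).mono hsub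
      have hbdd : BddAbove (lamk '' Ioo (dPW k) d0) := by
        refine ⟨lamk d0, fun y hy => ?_⟩
        obtain ⟨z, hz, rfl⟩ := hy
        exact (hmono (hsub hz) hd0 hz.2).le
      set L := sSup (lamk '' Ioo (dPW k) d0) with hLdef
      have htendL : Tendsto lamk (𝓝[<] d0) (𝓝 L) :=
        MonotoneOn.tendsto_nhdsWithin_Ioo_left hne hmonoOn hbdd
      have hL_le : L ≤ lamk d0 := by
        refine csSup_le (hne.image _) fun y hy => ?_
        obtain ⟨z, hz, rfl⟩ := hy
        exact (hmono (hsub hz) hd0 hz.2).le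
      have hL_pos : 0 < L := by
        obtain ⟨d1, hd1⟩ := hne
        exact lt_of_lt_of_le (hpos d1 (hsub hd1)) (le_csSup hbdd ⟨d1, hd1, rfl⟩)
      have hL_upper : ∀ d ∈ Ioo (dPW k) d0, lamk d ≤ L :=
        fun d hd => le_csSup hbdd ⟨d, hd, rfl⟩
      have hfL : fPW k L = d0 := by
        have h1 : Tendsto (fun d => fPW k (lamk d)) (𝓝[<] d0) (𝓝 (fPW k L)) :=
          (continuousAt_fPW hL_pos).tendsto.comp htendL
        have h2 : (fun d => fPW k (lamk d)) =ᶠ[𝓝[<] d0] id := by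
          filter_upwards [Ioo_mem_nhdsLT hd0'] with d hd
          exact hfd d (hsub hd)
        have h3 : Tendsto (fun d => fPW k (lamk d)) (𝓝[<] d0) (𝓝 d0) := by
          refine Tendsto.congr' h2.symm ?_
          exact tendsto_id.mono_left nhdsWithin_le_nhds
        exact tendsto_nhds_unique h1 h3
      -- show L = lamk d0
      rcases eq_or_lt_of_le hL_le with hEq | hLlt
      · show Tendsto lamk (𝓝[<] d0) (𝓝 (lamk d0))
        rwa [← hEq]
      · exfalso
        have hfmax : fPW k (lamk d0) = d0 := hfd d0 hd0
        have hcontIcc : ContinuousOn (fPW k) (Icc L (lamk d0)) := fun y hy =>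
          (continuousAt_fPW (lt_of_lt_of_le hL_pos hy.1)).continuousWithinAt
        have hderiv : ∀ x ∈ Ioo L (lamk d0),
            HasDerivAt (fPW k)
              ((poTail x (k - 1) - x * (Real.exp (-x) * x ^ n / (n.factorial : ℝ))) /
                (poTail x (k - 1)) ^ 2) x :=
          fun x hx => hasDerivAt_fPW hkn (hL_pos.trans hx.1)
        obtain ⟨c, hc, hc0⟩ := exists_hasDerivAt_eq_zero hLlt hcontIcc
          (hfL.trans hfmax.symm) hderiv
        have hcpos : 0 < c := hL_pos.trans hc.1
        have hnum : poTail c (k - 1) - c * (Real.exp (-c) * c ^ n / (n.factorial : ℝ)) = 0 := by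
          have hP2 : (poTail c (k - 1)) ^ 2 ≠ 0 := pow_ne_zero 2 (poTail_pos hcpos _).ne'
          have hfac : (n.factorial : ℝ) ≠ 0 := Nat.cast_ne_zero.2 n.factorial_ne_zero
          field_simp at hc0
          field_simp
          rw [mul_zero, div_eq_zero_iff] at hc0; linarith [hc0.resolve_right hP2]
        have hphi : phiF (n + 1) c - 1 / (n.factorial : ℝ) = 0 := by
          rw [hkn, gsign n c] at hnum
          have h1 : Real.exp (-c) * c ^ (n + 1) ≠ 0 := by positivity
          rcases mul_eq_zero.1 hnum with h | h
          · exact absurd h h1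
          · exact h
        have hS : StrictMonoOn (fPW k) (Ici c) :=
          f_strictMono_after hkn hcpos (by linarith)
        have hfc_lt : fPW k c < d0 := by
          have := hS (self_mem_Ici) (hc.2.le) hc.2
          rwa [hfmax] at this
        set d := max ((fPW k c + d0) / 2) ((dPW k + d0) / 2) with hddef
        have hd_lt : d < d0 := by
          apply max_lt <;> linarith
        have hd_gt_f : fPW k c < d := lt_of_lt_of_le (by linarith) (le_max_left _ _)
        have hd_gt_a : dPW k < d := lt_of_lt_of_le (by linarith) (le_max_right _ _)
        have hIcc : d ∈ Icc (fPW k c) (fPW k (lamk d0)) := by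
          rw [hfmax]; exact ⟨hd_gt_f.le, hd_lt.le⟩
        obtain ⟨lam', hlam', hflam'⟩ := intermediate_value_Icc hc.2.le
          (fun y hy => (continuousAt_fPW (hcpos.trans_le hy.1)).continuousWithinAt) hIcc
        have hlam'_pos : 0 < lam' := hcpos.trans_le hlam'.1
        have h1 : lam' ≤ lamk d := hmax d hd_gt_a lam' hlam'_pos hflam'
        have h2 : lamk d ≤ L := hL_upper d ⟨hd_gt_a, hd_lt⟩
        have h3 : L < c := hc.1
        linarith [hlam'.1]
    · -- right continuity
      have hne : (Ioo d0 (d0 + 1)).Nonempty := nonempty_Ioo.2 (by linarith)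
      have hsub : Ioo d0 (d0 + 1) ⊆ Ioi (dPW k) := fun x hx => lt_trans hd0' hx.1
      have hmonoOn : MonotoneOn lamk (Ioo d0 (d0 + 1)) :=
        (hmono.monotoneOn).mono hsub
      have hbdd : BddBelow (lamk '' Ioo d0 (d0 + 1)) := by
        refine ⟨lamk d0, fun y hy => ?_⟩
        obtain ⟨z, hz, rfl⟩ := hy
        exact (hmono hd0 (hsub hz) hz.1).le
      set R := sInf (lamk '' Ioo d0 (d0 + 1)) with hRdef
      have htendR : Tendsto lamk (𝓝[>] d0) (𝓝 R) :=
        MonotoneOn.tendsto_nhdsWithin_Ioo_right hne hmonoOn hbdd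
      have hR_ge : lamk d0 ≤ R := by
        refine le_csInf (hne.image _) fun y hy => ?_
        obtain ⟨z, hz, rfl⟩ := hy
        exact (hmono hd0 (hsub hz) hz.1).le
      have hR_pos : 0 < R := lt_of_lt_of_le (hpos d0 hd0) hR_ge
      have hfR : fPW k R = d0 := by
        have h1 : Tendsto (fun d => fPW k (lamk d)) (𝓝[>] d0) (𝓝 (fPW k R)) :=
          (continuousAt_fPW hR_pos).tendsto.comp htendR
        have h2 : (fun d => fPW k (lamk d)) =ᶠ[𝓝[>] d0] id := by
          filter_upwards [Ioo_mem_nhdsGT (show d0 < d0 + 1 by linarith)] with d hd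
          exact hfd d (hsub hd)
        have h3 : Tendsto (fun d => fPW k (lamk d)) (𝓝[>] d0) (𝓝 d0) := by
          refine Tendsto.congr' h2.symm ?_
          exact tendsto_id.mono_left nhdsWithin_le_nhds
        exact tendsto_nhds_unique h1 h3
      have hR_le : R ≤ lamk d0 := hmax d0 hd0 R hR_pos hfR
      have hReq : R = lamk d0 := le_antisymm hR_le hR_ge
      show Tendsto lamk (𝓝[>] d0) (𝓝 (lamk d0))
      rwa [← hReq]
  constructor
  · intro d hd d' hd' hdd'
    have h1 : lamk d ∈ Ioi (0:ℝ) := hpos d hd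
    have h2 : lamk d' ∈ Ioi (0:ℝ) := hpos d' hd'
    have := poTail_strictMonoOn (k - 1) h1 h2 (hmono hd hd' hdd')
    simpa only [hkk] using this
  · intro d hd
    exact (((continuous_poTail k).continuousAt).comp (hcont d hd)).continuousWithinAt
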